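/- Every complex eigenvalue σ of G satisfies |σ| ≤ 1; that is, if z ∈ ℂ^p is nonzero and the complexification of G satisfies Gz = σz, then |σ| ≤ 1. -/

import Mathlib

open Matrix BigOperators

/-- Every complex eigenvalue σ of G = −(L+D)⁻¹U satisfies
|σ| ≤ 1: if z ∈ ℂ^p is nonzero and the complexification of G satisfies
Gz = σz, then |σ| ≤ 1. -/
theorem stmt_3 {n p : ℕ} (X : Matrix (Fin n) (Fin p) ℝ)
    (hX : ∀ i : Fin p, Xᵀ i ≠ 0)
    (L D U G : Matrix (Fin p) (Fin p) ℝ)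
    (hL : ∀ i j, L i j = if j < i then (Xᵀ * X) i j else 0)
    (hD : ∀ i j, D i j = if i = j then (Xᵀ * X) i j else 0)
    (hU : ∀ i j, U i j = if i < j then (Xᵀ * X) i j else 0)
    (hG : G = -((L + D)⁻¹ * U))
    (σ : ℂ) (z : Fin p → ℂ) (hz : z ≠ 0)
    (heig : (G.map (fun r : ℝ => (r : ℂ))).mulVec z = σ • z) :
    ‖σ‖ ≤ 1 := by
  have hsym : ∀ i j, (Xᵀ * X) i j = (Xᵀ * X) j i := by
    intro i j; simp [Matrix.mul_apply, mul_comm]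
  have hDpos : ∀ i, 0 < D i i := by
    intro i
    rw [hD]
    simp only [if_pos rfl, Matrix.mul_apply]
    have hne : ∃ k, Xᵀ i k ≠ 0 := by
      by_contra h; push_neg at h; exact hX i (funext h)
    obtain ⟨k, hk⟩ := hne
    refine Finset.sum_pos' (fun k _ => ?_) ⟨k, Finset.mem_univ k, ?_⟩
    · simp only [Matrix.transpose_apply]; exact mul_self_nonneg _
    · simp only [Matrix.transpose_apply] at hk ⊢; exact mul_self_pos.mpr hk
  -- L+D is lower triangular with positive diagonal, hence invertible
  have htri : (L + D).BlockTriangular OrderDual.toDual := by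
    intro i j hij
    simp only [OrderDual.toDual_lt_toDual] at hij
    simp [Matrix.add_apply, hL, hD, hij.ne, not_lt.mpr hij.le]
  have hdet : IsUnit (L + D).det := by
    rw [Matrix.det_of_lowerTriangular _ htri]
    refine isUnit_iff_ne_zero.mpr (ne_of_gt (Finset.prod_pos fun i _ => ?_))
    have hLii : L i i = 0 := by simp [hL]
    simpa [Matrix.add_apply, hLii] using hDpos i
  have hLDG : (L + D) * G = -U := by
    rw [hG, mul_neg, ← mul_assoc, Matrix.mul_nonsing_inv _ hdet, one_mul]
  set c : ℝ → ℂ := fun r : ℝ => (r : ℂ) with hcdef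
  -- transfer the eigen equation through (L+D)
  have key : -((U.map c).mulVec z) = σ • ((L + D).map c).mulVec z := by
    have h1 : (((L + D).map c) * (G.map c)).mulVec z = σ • ((L + D).map c).mulVec z := by
      rw [← Matrix.mulVec_mulVec, heig, Matrix.mulVec_smul]
    have hmm : ((L + D) * G).map c = (L + D).map c * G.map c :=
      Matrix.map_mul (f := Complex.ofRealHom)
    rw [← hmm, hLDG] at h1
    have hneg : (-U).map c = -(U.map c) := by
      ext i j; simp [Matrix.map_apply, hcdef]
    rw [hneg, Matrix.neg_mulVec] at h1
    exact h1
  set a : ℂ := star z ⬝ᵥ (L.map c).mulVec z with ha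
  set u : ℂ := star z ⬝ᵥ (U.map c).mulVec z with hu
  set b : ℝ := ∑ i, D i i * Complex.normSq (z i) with hb
  -- diagonal dot product
  have hDmv : (D.map c).mulVec z = fun i => (D i i : ℂ) * z i := by
    funext i
    simp only [Matrix.mulVec, dotProduct, Matrix.map_apply]
    rw [Finset.sum_eq_single i]
    · intro j _ hji
      rw [hD]; simp [Ne.symm hji, hcdef]
    · intro h; exact absurd (Finset.mem_univ i) h
  have hbC : star z ⬝ᵥ (D.map c).mulVec z = (b : ℂ) := by
    rw [hDmv, hb]
    push_cast
    simp only [dotProduct, Pi.star_apply]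
    refine Finset.sum_congr rfl fun i _ => ?_
    rw [Complex.star_def, show (starRingEnd ℂ) (z i) * ((D i i : ℂ) * z i)
        = (D i i : ℂ) * (z i * (starRingEnd ℂ) (z i)) by ring, Complex.mul_conj]
  have hbpos : 0 < b := by
    obtain ⟨i, hi⟩ : ∃ i, z i ≠ 0 := by
      by_contra h; push_neg at h; exact hz (funext h)
    refine Finset.sum_pos' (fun j _ => ?_) ⟨i, Finset.mem_univ i, ?_⟩
    · exact mul_nonneg (hDpos j).le (Complex.normSq_nonneg _)
    · exact mul_pos (hDpos i) (Complex.normSq_pos.mpr hi)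
  -- u = conj a
  have hUL : ∀ i j, U i j = L j i := by
    intro i j
    rw [hU, hL]
    by_cases h : i < j
    · simp [h, hsym i j]
    · simp [h]
  have hu_conj : u = (starRingEnd ℂ) a := by
    rw [hu, ha]
    simp only [dotProduct, Matrix.mulVec, Matrix.map_apply, map_sum, _root_.map_mul,
      Pi.star_apply, Complex.star_def, Complex.conj_conj, hcdef, Complex.conj_ofReal,
      Finset.mul_sum]
    rw [Finset.sum_comm]
    refine Finset.sum_congr rfl fun j _ => Finset.sum_congr rfl fun i _ => ?_
    rw [hUL]
    ring
  -- positive semidefiniteness of XᵀX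
  have hA_split : L + D + U = Xᵀ * X := by
    ext i j
    rcases lt_trichotomy i j with h | h | h
    · simp [Matrix.add_apply, hL i j, hD i j, hU i j, h, h.ne, not_lt.mpr h.le]
    · subst h; simp [Matrix.add_apply, hL, hD, hU]
    · simp [Matrix.add_apply, hL i j, hD i j, hU i j, h, h.ne', not_lt.mpr h.le]
  set w : Fin n → ℂ := (X.map c).mulVec z with hw
  set S : ℝ := ∑ k, Complex.normSq (w k) with hS
  have hstarw : (X.map c).mulVec (star z) = star w := by
    funext k
    simp only [Matrix.mulVec, dotProduct, Pi.star_apply, hw, Matrix.map_apply, hcdef,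
      Complex.star_def, map_sum, _root_.map_mul, Complex.conj_ofReal]
  have hq : a + (b : ℂ) + u = (S : ℂ) := by
    have h1 : a + (b : ℂ) + u = star z ⬝ᵥ ((Xᵀ * X).map c).mulVec z := by
      rw [← hA_split]
      have : (L + D + U).map c = L.map c + D.map c + U.map c := by
        ext i j; simp [Matrix.map_apply, hcdef]
      rw [this, Matrix.add_mulVec, Matrix.add_mulVec, dotProduct_add,
        dotProduct_add, hbC, ha, hu]
    rw [h1]
    have h2 : (Xᵀ * X).map c = (X.map c)ᵀ * (X.map c) := by
      rw [show (Xᵀ * X).map c = Xᵀ.map c * X.map c from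
        Matrix.map_mul (f := Complex.ofRealHom), Matrix.transpose_map]
    rw [h2, ← Matrix.mulVec_mulVec, Matrix.dotProduct_mulVec, Matrix.vecMul_transpose,
      hstarw, ← hw]
    rw [hS]
    push_cast
    simp only [dotProduct, Pi.star_apply]
    refine Finset.sum_congr rfl fun k _ => ?_
    simp [Complex.star_def, Complex.mul_conj, mul_comm]
  have hSnn : 0 ≤ S := Finset.sum_nonneg fun k _ => Complex.normSq_nonneg _
  -- eigen relation: σ * (a + b) = -u
  have heq : σ * (a + (b : ℂ)) = -u := by
    have h := congrArg (fun v => star z ⬝ᵥ v) key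
    have hLD : (L + D).map c = L.map c + D.map c := by
      ext i j; simp [Matrix.map_apply, hcdef]
    simp only [dotProduct_neg, dotProduct_smul, smul_eq_mul] at h
    rw [hLD, Matrix.add_mulVec, dotProduct_add, hbC, ← ha, ← hu] at h
    linear_combination -h
  -- conclusion
  have hre : 2 * a.re + b = S := by
    have := congrArg Complex.re hq
    simp only [hu_conj, Complex.add_re, Complex.conj_re, Complex.ofReal_re] at this
    linarith
  have hne : a + (b : ℂ) ≠ 0 := by
    intro h0
    have hre0 : a.re + b = 0 := by
      have := congrArg Complex.re h0
      simpa using this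
    nlinarith
  have habs_le : ‖a‖ ≤ ‖a + (b : ℂ)‖ := by
    rw [Complex.norm_def, Complex.norm_def]
    apply Real.sqrt_le_sqrt
    simp only [Complex.normSq_apply, Complex.add_re, Complex.add_im, Complex.ofReal_re,
      Complex.ofReal_im, add_zero]
    nlinarith
  have hmul : ‖σ‖ * ‖a + (b : ℂ)‖ = ‖a‖ := by
    rw [← norm_mul, heq, hu_conj]
    simp [Complex.norm_conj]
  have hpos : 0 < ‖a + (b : ℂ)‖ := by
    simpa using (norm_pos_iff.mpr hne)
  calc ‖σ‖ = ‖a‖ / ‖a + (b : ℂ)‖ := by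
        field_simp [hpos.ne'] at hmul ⊢; linarith [hmul]
    _ ≤ 1 := (div_le_one hpos).mpr habs_le
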